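/- Let G be a group with presentation ⟨X | R⟩ in which every generator is an involution and every relator has even length. If I = X, or I = {x} is a singleton subset of X, then for every w ∈ G the set wG_I ∩ G^I contains exactly one element, and consequently the factorisation of w with respect to G_I is unique: if w = ab = a′b′ with a, a′ ∈ G^I and b, b′ ∈ G_I, then a = a′ and b = b′. -/

import Mathlib

/-- The length of an element of a presented group whose generators are involutions:
the least `r` such that `w` is a product of `r` images of generators. -/
noncomputable def genLength {α : Type*} (R : Set (FreeGroup α)) (w : PresentedGroup R) : ℕ :=
  sInf {r : ℕ | ∃ L : List α, L.length = r ∧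
    (L.map (PresentedGroup.of : α → PresentedGroup R)).prod = w}

namespace Stmt10Aux

variable {α : Type*} [DecidableEq α] {R : Set (FreeGroup α)}

lemma prod_cond (L : List (α × Bool)) :
    (L.map fun x : α × Bool => cond x.2 (Multiplicative.ofAdd (1 : ZMod 2))
      (Multiplicative.ofAdd (1 : ZMod 2))⁻¹).prod
      = Multiplicative.ofAdd ((L.length : ZMod 2)) := by
  have hXi : (Multiplicative.ofAdd (1 : ZMod 2))⁻¹ = Multiplicative.ofAdd 1 := by decide
  induction L with
  | nil => simp
  | cons a t ih =>
      have hc : (cond a.2 (Multiplicative.ofAdd (1 : ZMod 2))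
          (Multiplicative.ofAdd (1 : ZMod 2))⁻¹) = Multiplicative.ofAdd 1 := by
        cases a.2 <;> simp [hXi]
      rw [List.map_cons, List.prod_cons, ih, hc, ← ofAdd_add, List.length_cons]
      congr 1
      push_cast
      ring

noncomputable def eps (heven : ∀ r ∈ R, Even (FreeGroup.toWord r).length) :
    PresentedGroup R →* Multiplicative (ZMod 2) :=
  PresentedGroup.toGroup (f := fun _ : α => Multiplicative.ofAdd (1 : ZMod 2)) (by
    intro r hr
    have h1 : r = FreeGroup.mk r.toWord := (FreeGroup.mk_toWord).symm
    rw [h1, FreeGroup.lift_mk, prod_cond]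
    obtain ⟨k, hk⟩ := heven r hr
    rw [hk]
    push_cast
    have h0 : ((k : ZMod 2) + k) = 0 := by
      have h2 : (2 : ZMod 2) = 0 := by decide
      calc (k : ZMod 2) + k = 2 * k := by ring
        _ = 0 := by rw [h2, zero_mul]
    rw [h0]
    rfl)

lemma eps_of (heven : ∀ r ∈ R, Even (FreeGroup.toWord r).length) (x : α) :
    eps heven (PresentedGroup.of x) = Multiplicative.ofAdd (1 : ZMod 2) :=
  PresentedGroup.toGroup.of _

lemma eps_list (heven : ∀ r ∈ R, Even (FreeGroup.toWord r).length) (L : List α) :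
    eps heven ((L.map (PresentedGroup.of : α → PresentedGroup R)).prod)
      = Multiplicative.ofAdd ((L.length : ZMod 2)) := by
  induction L with
  | nil => simp
  | cons a t ih =>
      rw [List.map_cons, List.prod_cons, map_mul, eps_of, ih, ← ofAdd_add,
        List.length_cons]
      congr 1
      push_cast
      ring

end Stmt10Aux

namespace Stmt10Aux

variable {α : Type*} [DecidableEq α] {R : Set (FreeGroup α)}

lemma of_inv (hinv : ∀ x : α, (PresentedGroup.of x : PresentedGroup R) ^ 2 = 1) (x : α) :
    (PresentedGroup.of x : PresentedGroup R)⁻¹ = PresentedGroup.of x := by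
  have h := hinv x
  rw [pow_two] at h
  exact inv_eq_of_mul_eq_one_right h

lemma exists_list (hinv : ∀ x : α, (PresentedGroup.of x : PresentedGroup R) ^ 2 = 1)
    (w : PresentedGroup R) :
    ∃ L : List α, (L.map (PresentedGroup.of : α → PresentedGroup R)).prod = w := by
  induction w with
  | _ z =>
    induction z using FreeGroup.induction_on with
    | C1 => exact ⟨[], by simp⟩
    | of x => exact ⟨[x], by simp; rfl⟩
    | inv_of x _ =>
        refine ⟨[x], ?_⟩
        show (List.map PresentedGroup.of [x]).prod = PresentedGroup.mk R (FreeGroup.of x)⁻¹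
        rw [map_inv]
        show (List.map PresentedGroup.of [x]).prod = (PresentedGroup.of x : PresentedGroup R)⁻¹
        rw [of_inv hinv]
        simp
    | mul y z hy hz =>
        obtain ⟨L1, h1⟩ := hy
        obtain ⟨L2, h2⟩ := hz
        refine ⟨L1 ++ L2, ?_⟩
        rw [List.map_append, List.prod_append, h1, h2, map_mul]

lemma genLength_spec (hinv : ∀ x : α, (PresentedGroup.of x : PresentedGroup R) ^ 2 = 1)
    (w : PresentedGroup R) :
    ∃ L : List α, L.length = genLength R w ∧
      (L.map (PresentedGroup.of : α → PresentedGroup R)).prod = w := by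
  have hne : {r : ℕ | ∃ L : List α, L.length = r ∧
      (L.map (PresentedGroup.of : α → PresentedGroup R)).prod = w}.Nonempty := by
    obtain ⟨L, hL⟩ := exists_list hinv w
    exact ⟨L.length, L, rfl, hL⟩
  have := Nat.sInf_mem hne
  obtain ⟨L, hL1, hL2⟩ := this
  exact ⟨L, hL1, hL2⟩

lemma genLength_le (w : PresentedGroup R) (L : List α)
    (h : (L.map (PresentedGroup.of : α → PresentedGroup R)).prod = w) :
    genLength R w ≤ L.length :=
  Nat.sInf_le ⟨L, rfl, h⟩

lemma genLength_one : genLength R (1 : PresentedGroup R) = 0 :=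
  Nat.eq_zero_of_le_zero (genLength_le 1 [] (by simp))

lemma length_ne (hinv : ∀ x : α, (PresentedGroup.of x : PresentedGroup R) ^ 2 = 1)
    (heven : ∀ r ∈ R, Even (FreeGroup.toWord r).length)
    (w : PresentedGroup R) (x : α) :
    genLength R (w * PresentedGroup.of x) ≠ genLength R w := by
  obtain ⟨L1, hl1, hp1⟩ := genLength_spec hinv w
  obtain ⟨L2, hl2, hp2⟩ := genLength_spec hinv (w * PresentedGroup.of x)
  intro heq
  have e1 : eps heven w = Multiplicative.ofAdd ((L1.length : ZMod 2)) := by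
    rw [← hp1, eps_list]
  have e2 : eps heven (w * PresentedGroup.of x)
      = Multiplicative.ofAdd ((L2.length : ZMod 2)) := by
    rw [← hp2, eps_list]
  rw [map_mul, eps_of, e1, ← ofAdd_add] at e2
  have : ((L2.length : ZMod 2)) = (L1.length : ZMod 2) + 1 :=
    Multiplicative.ofAdd.injective e2.symm
  rw [hl1, hl2, heq] at this
  have h01 : (0 : ZMod 2) = 1 := by
    have := left_eq_add.mp this
    exact this.symm ▸ rfl
  exact absurd h01 (by decide)

lemma eq_one_of_all_lt (hinv : ∀ x : α, (PresentedGroup.of x : PresentedGroup R) ^ 2 = 1)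
    (a : PresentedGroup R)
    (h : ∀ x : α, genLength R a < genLength R (a * PresentedGroup.of x)) : a = 1 := by
  obtain ⟨L, hl, hp⟩ := genLength_spec hinv a
  rcases L.eq_nil_or_concat' with rfl | ⟨L', y, rfl⟩
  · simpa using hp.symm
  · exfalso
    have hprod : (L'.map (PresentedGroup.of : α → PresentedGroup R)).prod
        = a * PresentedGroup.of y := by
      have : ((L' ++ [y]).map (PresentedGroup.of : α → PresentedGroup R)).prod
          = (L'.map (PresentedGroup.of : α → PresentedGroup R)).prod * PresentedGroup.of y := by
        simp
      rw [this] at hp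
      rw [← hp, mul_assoc, ← pow_two, hinv, mul_one]
    have hle : genLength R (a * PresentedGroup.of y) ≤ L'.length :=
      genLength_le _ _ hprod
    have := h y
    simp only [List.length_append, List.length_singleton] at hl
    omega

lemma mem_closure_single (hinv : ∀ x : α, (PresentedGroup.of x : PresentedGroup R) ^ 2 = 1)
    (x : α) (b : PresentedGroup R)
    (hb : b ∈ Subgroup.closure ({PresentedGroup.of x} : Set (PresentedGroup R))) :
    b = 1 ∨ b = PresentedGroup.of x := by
  rw [Subgroup.mem_closure_singleton] at hb
  obtain ⟨n, rfl⟩ := hb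
  set g : PresentedGroup R := PresentedGroup.of x with hg
  have h2 : g ^ (2 : ℤ) = 1 := by
    rw [show (2 : ℤ) = ((2 : ℕ) : ℤ) by norm_num, zpow_natCast]
    exact hinv x
  have hmod : g ^ n = g ^ (n % 2) := by
    conv_lhs => rw [← Int.mul_ediv_add_emod n 2]
    rw [zpow_add, zpow_mul, h2, one_zpow, one_mul]
  rcases Int.emod_two_eq n with h | h
  · left; rw [hmod, h, zpow_zero]
  · right; rw [hmod, h, zpow_one]

lemma sing_unique (hinv : ∀ x : α, (PresentedGroup.of x : PresentedGroup R) ^ 2 = 1)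
    (x : α) (a₁ a₂ : PresentedGroup R)
    (h₁ : genLength R a₁ < genLength R (a₁ * PresentedGroup.of x))
    (h₂ : genLength R a₂ < genLength R (a₂ * PresentedGroup.of x))
    (hrel : a₂ = a₁ ∨ a₂ = a₁ * PresentedGroup.of x) : a₁ = a₂ := by
  rcases hrel with rfl | rfl
  · rfl
  · exfalso
    have hgg : a₁ * PresentedGroup.of x * PresentedGroup.of x = a₁ := by
      rw [mul_assoc, ← pow_two, hinv, mul_one]
    rw [hgg] at h₂
    omega

lemma sing_rel (hinv : ∀ x : α, (PresentedGroup.of x : PresentedGroup R) ^ 2 = 1)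
    (x : α) (w a₁ a₂ : PresentedGroup R)
    (ha₁ : a₁ = w ∨ a₁ = w * PresentedGroup.of x)
    (ha₂ : a₂ = w ∨ a₂ = w * PresentedGroup.of x) :
    a₂ = a₁ ∨ a₂ = a₁ * PresentedGroup.of x ∨ a₁ = a₂ * PresentedGroup.of x := by
  have hgg : w * PresentedGroup.of x * PresentedGroup.of x = w := by
    rw [mul_assoc, ← pow_two, hinv, mul_one]
  rcases ha₁ with rfl | rfl <;> rcases ha₂ with h | h <;> subst h <;> simp [hgg]

lemma sing_a_eq (hinv : ∀ x : α, (PresentedGroup.of x : PresentedGroup R) ^ 2 = 1)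
    (x : α) (w a₁ a₂ : PresentedGroup R)
    (h₁ : genLength R a₁ < genLength R (a₁ * PresentedGroup.of x))
    (h₂ : genLength R a₂ < genLength R (a₂ * PresentedGroup.of x))
    (ha₁ : a₁ = w ∨ a₁ = w * PresentedGroup.of x)
    (ha₂ : a₂ = w ∨ a₂ = w * PresentedGroup.of x) : a₁ = a₂ := by
  rcases sing_rel hinv x w a₁ a₂ ha₁ ha₂ with h | h | h
  · exact h.symm
  · exact sing_unique hinv x a₁ a₂ h₁ h₂ (Or.inr h)
  · exact (sing_unique hinv x a₂ a₁ h₂ h₁ (Or.inr h)).symm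

end Stmt10Aux


theorem stmt_10 {α : Type*} [DecidableEq α] (R : Set (FreeGroup α))
    (hinv : ∀ x : α, (PresentedGroup.of x : PresentedGroup R) ^ 2 = 1)
    (heven : ∀ r ∈ R, Even (FreeGroup.toWord r).length)
    (I : Set α) (hI : I = Set.univ ∨ ∃ x : α, I = {x}) (w : PresentedGroup R) :
    (∃! a : PresentedGroup R,
        (∃ b ∈ Subgroup.closure ((fun x : α => (PresentedGroup.of x : PresentedGroup R)) '' I),
            a = w * b) ∧
        ∀ x ∈ I, genLength R a < genLength R (a * PresentedGroup.of x)) ∧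
      ∀ a a' b b' : PresentedGroup R,
        (∀ x ∈ I, genLength R a < genLength R (a * PresentedGroup.of x)) →
        (∀ x ∈ I, genLength R a' < genLength R (a' * PresentedGroup.of x)) →
        b ∈ Subgroup.closure ((fun x : α => (PresentedGroup.of x : PresentedGroup R)) '' I) →
        b' ∈ Subgroup.closure ((fun x : α => (PresentedGroup.of x : PresentedGroup R)) '' I) →
        w = a * b → w = a' * b' → a = a' ∧ b = b' := by
  rcases hI with rfl | ⟨x, rfl⟩
  · -- I = Set.univ
    have hcl : Subgroup.closure
        ((fun x : α => (PresentedGroup.of x : PresentedGroup R)) '' Set.univ) = ⊤ := by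
      rw [Set.image_univ]
      exact PresentedGroup.closure_range_of R
    have hone : ∀ y : α, genLength R (1 : PresentedGroup R)
        < genLength R (1 * PresentedGroup.of y) := by
      intro y
      rw [Stmt10Aux.genLength_one]
      have h := Stmt10Aux.length_ne hinv heven 1 y
      rw [Stmt10Aux.genLength_one] at h
      omega
    constructor
    · refine ⟨1, ⟨⟨w⁻¹, by rw [hcl]; exact Subgroup.mem_top _, by group⟩,
        fun y _ => hone y⟩, ?_⟩
      rintro a ⟨-, ha⟩
      exact Stmt10Aux.eq_one_of_all_lt hinv a fun y => ha y (Set.mem_univ y)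
    · intro a a' b b' ha ha' _ _ hw hw'
      have h1 : a = 1 := Stmt10Aux.eq_one_of_all_lt hinv a fun y => ha y trivial
      have h2 : a' = 1 := Stmt10Aux.eq_one_of_all_lt hinv a' fun y => ha' y trivial
      subst h1; subst h2
      refine ⟨rfl, ?_⟩
      rw [one_mul] at hw hw'
      rw [← hw, ← hw']
  · -- I = {x}
    set S := Subgroup.closure
      ((fun y : α => (PresentedGroup.of y : PresentedGroup R)) '' {x}) with hS
    have him : ((fun y : α => (PresentedGroup.of y : PresentedGroup R)) '' {x})
        = {PresentedGroup.of x} := Set.image_singleton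
    have hne := Stmt10Aux.length_ne hinv heven w x
    have hgg : ∀ u : PresentedGroup R,
        u * PresentedGroup.of x * PresentedGroup.of x = u := by
      intro u; rw [mul_assoc, ← pow_two, hinv, mul_one]
    have hmemg : PresentedGroup.of x ∈ S := by
      rw [hS, him]; exact Subgroup.subset_closure rfl
    have hcos : ∀ a b : PresentedGroup R, b ∈ S → a = w * b →
        a = w ∨ a = w * PresentedGroup.of x := by
      intro a b hb hab
      rw [hS, him] at hb
      rcases Stmt10Aux.mem_closure_single hinv x b hb with rfl | rfl
      · left; rw [hab, mul_one]
      · right; exact hab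
    have hex : ∃ a₀ : PresentedGroup R, (a₀ = w ∨ a₀ = w * PresentedGroup.of x) ∧
        genLength R a₀ < genLength R (a₀ * PresentedGroup.of x) := by
      rcases lt_or_gt_of_ne hne with hlt | hgt
      · exact ⟨w * PresentedGroup.of x, Or.inr rfl, by rw [hgg w]; exact hlt⟩
      · exact ⟨w, Or.inl rfl, hgt⟩
    obtain ⟨a₀, ha₀, hc₀⟩ := hex
    have hb₀ : ∃ b ∈ S, a₀ = w * b := by
      rcases ha₀ with h | h
      · exact ⟨1, one_mem S, by rw [h, mul_one]⟩
      · exact ⟨PresentedGroup.of x, hmemg, h⟩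
    constructor
    · refine ⟨a₀, ⟨hb₀, fun y hy => ?_⟩, ?_⟩
      · rcases hy with rfl; exact hc₀
      · rintro a ⟨⟨b, hb, hab⟩, hc⟩
        exact Stmt10Aux.sing_a_eq hinv x w a a₀ (hc x rfl) hc₀
          (hcos a b hb hab) ha₀
    · intro a a' b b' ha ha' hb hb' hw hw'
      have hab : a = w * b⁻¹ := eq_mul_inv_iff_mul_eq.mpr hw.symm
      have hab' : a' = w * b'⁻¹ := eq_mul_inv_iff_mul_eq.mpr hw'.symm
      have haa' : a = a' := Stmt10Aux.sing_a_eq hinv x w a a' (ha x rfl) (ha' x rfl)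
        (hcos a b⁻¹ (inv_mem hb) hab) (hcos a' b'⁻¹ (inv_mem hb') hab')
      refine ⟨haa', ?_⟩
      subst haa'
      rw [hw] at hw'
      exact mul_left_cancel hw'
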